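/- Let ζ ∈ ℂ with |ζ| = 1 and let z ∈ 𝔻. Then the limit of ρ(z, w) − ρ(0, w) as w → ζ with w ∈ 𝔻 exists and equals (1/2)·log(|ζ − z|² / (1 − |z|²)). -/

import Mathlib

open Filter Set

noncomputable section

/-- The inverse hyperbolic tangent: `artanh r = (1/2) log ((1+r)/(1-r))`. -/
def artanh (r : ℝ) : ℝ := (1 / 2) * Real.log ((1 + r) / (1 - r))

/-- The Poincaré (Kobayashi) distance on the unit disc
`ρ(z,w) = artanh |(z - w)/(1 - conj w * z)|`. -/
def pd (z w : ℂ) : ℝ := artanh (‖(z - w) / (1 - (starRingEnd ℂ) w * z)‖)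

lemma key (z w : ℂ) : (‖1 - (starRingEnd ℂ) w * z‖)^2 - (‖z-w‖)^2
    = (1 - (‖z‖)^2) * (1 - (‖w‖)^2) := by
  simp only [Complex.sq_norm, Complex.normSq_apply, Complex.sub_re, Complex.sub_im,
    Complex.mul_re, Complex.mul_im, Complex.one_re, Complex.one_im, Complex.conj_re,
    Complex.conj_im]
  ring


lemma pd_formula (z w : ℂ) (hz : ‖z‖ < 1) (hw : ‖w‖ < 1) :
    pd z w - pd 0 w = (1 / 2) * Real.log
      ((‖1 - (starRingEnd ℂ) w * z‖ + ‖z - w‖)^2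
        / ((1 - (‖z‖)^2) * (1 + ‖w‖)^2)) := by
  set N := ‖1 - (starRingEnd ℂ) w * z‖ with hN
  set d := ‖z - w‖ with hd
  set b := ‖w‖ with hb
  have hC : (0:ℝ) < 1 - (‖z‖)^2 := by nlinarith [norm_nonneg z]
  have hW : (0:ℝ) < 1 - b^2 := by nlinarith [norm_nonneg w]
  have hkey : N^2 - d^2 = (1 - (‖z‖)^2) * (1 - b^2) := key z w
  have hdn : (0:ℝ) ≤ d := norm_nonneg _
  have hNd : d < N := by
    refine lt_of_pow_lt_pow_left₀ 2 (norm_nonneg _) ?_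
    nlinarith
  have hN0 : (0:ℝ) < N := lt_of_le_of_lt hdn hNd
  have hb0 : (0:ℝ) ≤ b := norm_nonneg _
  have hb1 : b < 1 := hw
  have h1 : pd z w = (1/2) * Real.log ((N + d) / (N - d)) := by
    rw [pd, artanh, norm_div]
    congr 1
    rw [← hN, ← hd]
    field_simp
  have h2 : pd 0 w = (1/2) * Real.log ((1 + b) / (1 - b)) := by
    simp [pd, artanh, hb]
  rw [h1, h2]
  -- logs
  have hlogs : Real.log (N - d) + Real.log (N + d)
      = Real.log (1 - (‖z‖)^2) + (Real.log (1 - b) + Real.log (1 + b)) := by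
    rw [← Real.log_mul (show (0:ℝ) < N - d by linarith).ne' (show (0:ℝ) < N + d by linarith).ne',
      ← Real.log_mul (show (0:ℝ) < 1 - b by linarith).ne' (show (0:ℝ) < 1 + b by linarith).ne',
      ← Real.log_mul hC.ne'
        (mul_pos (show (0:ℝ) < 1 - b by linarith) (show (0:ℝ) < 1 + b by linarith)).ne']
    congr 1
    nlinarith
  rw [Real.log_div (by linarith : (0:ℝ) < N + d).ne' (by linarith : (0:ℝ) < N - d).ne',
    Real.log_div (by linarith : (0:ℝ) < 1 + b).ne' (by linarith : (0:ℝ) < 1 - b).ne',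
    Real.log_div (pow_pos (by linarith : (0:ℝ) < N + d) 2).ne'
      (mul_pos hC (pow_pos (by linarith : (0:ℝ) < 1 + b) 2)).ne',
    Real.log_mul hC.ne' (pow_pos (by linarith : (0:ℝ) < 1 + b) 2).ne',
    Real.log_pow, Real.log_pow]
  push_cast
  linarith


theorem tendsto_pd_sub_pd_zero (ζ z : ℂ) (hζ : ‖ζ‖ = 1) (hz : ‖z‖ < 1) :
    Filter.Tendsto (fun w => pd z w - pd 0 w)
      (nhdsWithin ζ {w : ℂ | ‖w‖ < 1})
      (nhds ((1 / 2) * Real.log ((‖ζ - z‖) ^ 2 / (1 - (‖z‖) ^ 2)))) := by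
  set F : ℂ → ℝ := fun w =>
    (‖1 - (starRingEnd ℂ) w * z‖ + ‖z - w‖)^2
      / ((1 - (‖z‖)^2) * (1 + ‖w‖)^2) with hF
  have hzζ : ζ - z ≠ 0 := by
    intro h
    rw [sub_eq_zero] at h
    rw [← h] at hz
    exact absurd hζ (ne_of_lt hz)
  have hC : (0:ℝ) < 1 - (‖z‖)^2 := by nlinarith [norm_nonneg z]
  have hNζ : ‖1 - (starRingEnd ℂ) ζ * z‖ = ‖ζ - z‖ := by
    have h1 : (starRingEnd ℂ) ζ * ζ = 1 := by
      rw [mul_comm, Complex.mul_conj, Complex.normSq_eq_norm_sq, hζ]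
      norm_num
    have h2 : 1 - (starRingEnd ℂ) ζ * z = (starRingEnd ℂ) ζ * (ζ - z) := by
      rw [mul_sub, h1]
    rw [h2, norm_mul, Complex.norm_conj, hζ, one_mul]
  have hFζ : F ζ = (‖ζ - z‖)^2 / (1 - (‖z‖)^2) := by
    have habs : ‖z - ζ‖ = ‖ζ - z‖ := norm_sub_rev z ζ
    have h4 : F ζ = (‖ζ - z‖ + ‖ζ - z‖)^2
        / ((1 - (‖z‖)^2) * (1 + 1)^2) := by
      simp only [hF, hNζ, habs, hζ]
    rw [h4]
    rw [div_eq_div_iff (by positivity) hC.ne']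
    ring
  have hFζpos : 0 < F ζ := by
    rw [hFζ]
    exact div_pos (pow_pos (norm_pos_iff.mpr hzζ) 2) hC
  have hcont : ContinuousAt F ζ := by
    have hc1 : Continuous fun w : ℂ => ‖1 - (starRingEnd ℂ) w * z‖ :=
      continuous_norm.comp (continuous_const.sub (Complex.continuous_conj.mul
        continuous_const))
    have hc2 : Continuous fun w : ℂ => ‖z - w‖ :=
      continuous_norm.comp (continuous_const.sub continuous_id)
    have hc3 : Continuous fun w : ℂ =>
        (1 - (‖z‖)^2) * (1 + ‖w‖)^2 :=
      continuous_const.mul ((continuous_const.add continuous_norm).pow 2)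
    refine ContinuousAt.div (((hc1.add hc2).pow 2).continuousAt) hc3.continuousAt ?_
    have : (0:ℝ) < 1 + ‖ζ‖ := by positivity
    positivity
  have hlog : ContinuousAt (fun w => (1/2 : ℝ) * Real.log (F w)) ζ :=
    continuousAt_const.mul ((Real.continuousAt_log hFζpos.ne').comp hcont)
  have htend : Filter.Tendsto (fun w => (1/2 : ℝ) * Real.log (F w))
      (nhdsWithin ζ {w : ℂ | ‖w‖ < 1})
      (nhds ((1/2 : ℝ) * Real.log (F ζ))) :=
    hlog.continuousWithinAt
  rw [hFζ] at htend
  refine htend.congr' ?_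
  filter_upwards [self_mem_nhdsWithin] with w hw
  exact (pd_formula z w hz hw).symm
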